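/- On the set $\mathcal{M}_+(\Omega,\mu_0)$ of finite measures equivalent to $\mu_0$, define $\mu' \preceq \mu$ iff $\mu' = \phi\mu$ with $\phi \in L^p(\Omega,\mu)$ for some $p>1$. Then $\preceq$ is transitive: if $\mu'' \preceq \mu'$ and $\mu' \preceq \mu$, then $\mu'' \preceq \mu$. Explicitly, if $\mu' = \phi\mu$ with $\phi \in L^p(\Omega,\mu)$ and $\mu'' = \psi\mu'$ with $\psi \in L^{p'}(\Omega,\mu')$ for $p,p'>1$, then $\psi\phi \in L^{p''}(\Omega,\mu)$ where $p'' = pp'/(p+p'-1) > 1$. -/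

import Mathlib

open MeasureTheory ENNReal

/-- Transitivity of the preorder `≼` on finite measures equivalent to `μ`:
if `μ' = φ·μ` with `φ ∈ L^p(μ)` and `μ'' = ψ·μ'` with `ψ ∈ L^{p'}(μ')`, `p, p' > 1`,
then `ψφ ∈ L^{p''}(μ)` with `p'' = pp'/(p + p' - 1) > 1`; in particular `μ'' ≼ μ`. -/
theorem stmt_4 {Ω : Type*} [MeasurableSpace Ω] (μ : Measure Ω) [IsFiniteMeasure μ]
    (φ ψ : Ω → ℝ) (hφpos : ∀ ω, 0 < φ ω) (hψpos : ∀ ω, 0 < ψ ω)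
    (p p' : ℝ) (hp : 1 < p) (hp' : 1 < p')
    (hφ : MemLp φ (ENNReal.ofReal p) μ)
    (hψ : MemLp ψ (ENNReal.ofReal p')
      (μ.withDensity (fun ω => ENNReal.ofReal (φ ω)))) :
    1 < p * p' / (p + p' - 1) ∧
      MemLp (fun ω => ψ ω * φ ω) (ENNReal.ofReal (p * p' / (p + p' - 1))) μ := by
  set q : ℝ := p * p' / (p + p' - 1) with hqdef
  have hden : (0:ℝ) < p + p' - 1 := by linarith
  have hq : 1 < q := by
    rw [hqdef, lt_div_iff₀ hden]; nlinarith
  have hq0 : (0:ℝ) < q := by linarith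
  refine ⟨hq, ?_⟩
  -- measurability setup
  have hφa : AEMeasurable (fun ω => ENNReal.ofReal (φ ω)) μ :=
    ENNReal.measurable_ofReal.comp_aemeasurable hφ.1.aemeasurable
  have hac : μ ≪ μ.withDensity (fun ω => ENNReal.ofReal (φ ω)) :=
    withDensity_absolutelyContinuous' hφa
      (Filter.Eventually.of_forall fun ω => (ENNReal.ofReal_pos.mpr (hφpos ω)).ne')
  have hψm : AEStronglyMeasurable ψ μ := hψ.1.mono_ac hac
  -- conjugate exponents
  set a : ℝ := (p + p' - 1) / p with hadef
  set b : ℝ := (p + p' - 1) / (p' - 1) with hbdef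
  have hab : a.HolderConjugate b := by
    rw [Real.holderConjugate_iff]
    constructor
    · rw [hadef, lt_div_iff₀ (by linarith : (0:ℝ) < p)]; linarith
    · rw [hadef, hbdef]
      field_simp
      ring
  -- nnnorm conversions
  have hψe : ∀ ω, ‖ψ ω‖ₑ = ENNReal.ofReal (ψ ω) := fun ω =>
    (Real.enorm_eq_ofReal (hψpos ω).le)
  have hφe : ∀ ω, ‖φ ω‖ₑ = ENNReal.ofReal (φ ω) := fun ω =>
    (Real.enorm_eq_ofReal (hφpos ω).le)
  -- finiteness of the two basic integrals
  have hB : ∫⁻ ω, (ENNReal.ofReal (φ ω)) ^ p ∂μ < ∞ := by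
    have := (eLpNorm_lt_top_iff_lintegral_rpow_enorm_lt_top
      (by simpa using (by linarith : (0:ℝ) < p)) ENNReal.ofReal_ne_top).mp hφ.2
    simpa [ENNReal.toReal_ofReal (by linarith : (0:ℝ) ≤ p), hφe] using this
  have hA : ∫⁻ ω, (ENNReal.ofReal (ψ ω)) ^ p' * ENNReal.ofReal (φ ω) ∂μ < ∞ := by
    have h1 := (eLpNorm_lt_top_iff_lintegral_rpow_enorm_lt_top
      (by simpa using (by linarith : (0:ℝ) < p')) ENNReal.ofReal_ne_top).mp hψ.2
    rw [ENNReal.toReal_ofReal (by linarith : (0:ℝ) ≤ p')] at h1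
    have hg : AEMeasurable (fun ω => ‖ψ ω‖ₑ ^ p')
        (μ.withDensity (fun ω => ENNReal.ofReal (φ ω))) :=
      hψ.1.aemeasurable.enorm.pow_const p'
    rw [lintegral_withDensity_eq_lintegral_mul₀' hφa hg] at h1
    simpa [hψe, mul_comm] using h1
  -- Hölder
  have key : ∫⁻ ω, (ENNReal.ofReal (ψ ω) * ENNReal.ofReal (φ ω)) ^ q ∂μ ≤
      (∫⁻ ω, (ENNReal.ofReal (ψ ω)) ^ p' * ENNReal.ofReal (φ ω) ∂μ) ^ (1/a) *
      (∫⁻ ω, (ENNReal.ofReal (φ ω)) ^ p ∂μ) ^ (1/b) := by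
    have hfm : AEMeasurable
        (fun ω => ((ENNReal.ofReal (ψ ω)) ^ p' * ENNReal.ofReal (φ ω)) ^ (1/a)) μ :=
      (((ENNReal.measurable_ofReal.comp_aemeasurable hψm.aemeasurable).pow_const p').mul
        hφa).pow_const _
    have hgm : AEMeasurable (fun ω => ((ENNReal.ofReal (φ ω)) ^ p) ^ (1/b)) μ :=
      (hφa.pow_const p).pow_const _
    have H := ENNReal.lintegral_mul_le_Lp_mul_Lq μ hab hfm hgm
    have ha0 : a ≠ 0 := hab.pos.ne'
    have hb0 : b ≠ 0 := hab.symm.pos.ne'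
    calc ∫⁻ ω, (ENNReal.ofReal (ψ ω) * ENNReal.ofReal (φ ω)) ^ q ∂μ
        = ∫⁻ ω, ((ENNReal.ofReal (ψ ω)) ^ p' * ENNReal.ofReal (φ ω)) ^ (1/a) *
            ((ENNReal.ofReal (φ ω)) ^ p) ^ (1/b) ∂μ := by
          refine lintegral_congr fun ω => ?_
          have hs0 : ENNReal.ofReal (ψ ω) ≠ 0 := (ENNReal.ofReal_pos.mpr (hψpos ω)).ne'
          have ht0 : ENNReal.ofReal (φ ω) ≠ 0 := (ENNReal.ofReal_pos.mpr (hφpos ω)).ne'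
          rw [ENNReal.mul_rpow_of_nonneg _ _ hq0.le,
            ENNReal.mul_rpow_of_nonneg _ _ (by positivity : (0:ℝ) ≤ 1/a),
            ← ENNReal.rpow_mul, ← ENNReal.rpow_mul]
          have e1 : p' * (1/a) = q := by
            rw [hadef, hqdef]; field_simp
          have e2 : 1/a + p * (1/b) = q := by
            rw [hadef, hbdef, hqdef]; field_simp; ring
          rw [e1, mul_assoc, ← ENNReal.rpow_add _ _ ht0 ENNReal.ofReal_ne_top, e2]
      _ ≤ _ := by
          refine H.trans (le_of_eq ?_)
          congr 1
          · congr 1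
            refine lintegral_congr fun ω => ?_
            rw [← ENNReal.rpow_mul, one_div, inv_mul_cancel₀ ha0, ENNReal.rpow_one]
          · congr 1
            refine lintegral_congr fun ω => ?_
            rw [← ENNReal.rpow_mul, one_div, inv_mul_cancel₀ hb0, ENNReal.rpow_one]
  refine ⟨hψm.mul hφ.1, ?_⟩
  rw [eLpNorm_lt_top_iff_lintegral_rpow_enorm_lt_top
    (by simpa using hq0) ENNReal.ofReal_ne_top, ENNReal.toReal_ofReal hq0.le]
  have : ∀ ω, ‖ψ ω * φ ω‖ₑ = ENNReal.ofReal (ψ ω) * ENNReal.ofReal (φ ω) := by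
    intro ω
    rw [Real.enorm_eq_ofReal (mul_nonneg (hψpos ω).le (hφpos ω).le), ENNReal.ofReal_mul (hψpos ω).le]
  simp_rw [this]
  exact key.trans_lt (ENNReal.mul_lt_top
    (ENNReal.rpow_lt_top_of_nonneg (div_nonneg zero_le_one hab.pos.le) hA.ne)
    (ENNReal.rpow_lt_top_of_nonneg (div_nonneg zero_le_one hab.symm.pos.le) hB.ne))
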